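/- Let R and Q be real Hilbert spaces and T : R → Q a continuous linear map. Suppose there is a constant C† > 0 such that for every q ∈ Q one has sup over nonzero w ∈ R of ⟨T w, q⟩_Q / ‖w‖_R ≥ C† ‖q‖_Q. Then for every q ∈ Q there exists w ∈ R with T w = q and ‖w‖_R ≤ (1/C†) ‖q‖_Q. -/

import Mathlib

open scoped RealInnerProductSpace

/-- Lemma (bounded right inverse from an inf-sup condition): if `T : R → Q` is a continuous
linear map between real Hilbert spaces and there is `C† > 0` such that for every `q ∈ Q`
the supremum over nonzero `w` of `⟨T w, q⟩ / ‖w‖` is at least `C† ‖q‖`, then every `q`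
has a preimage `w` with `‖w‖ ≤ (1/C†) ‖q‖`. -/
theorem bounded_right_inverse_of_inf_sup
    {R Q : Type*} [NormedAddCommGroup R] [InnerProductSpace ℝ R] [CompleteSpace R]
    [NormedAddCommGroup Q] [InnerProductSpace ℝ Q] [CompleteSpace Q]
    (T : R →L[ℝ] Q) (Cdag : ℝ) (hCdag : 0 < Cdag)
    (hsup : ∀ q : Q, Cdag * ‖q‖ ≤ ⨆ w : {w : R // w ≠ 0}, ⟪T w.1, q⟫ / ‖w.1‖) :
    ∀ q : Q, ∃ w : R, T w = q ∧ ‖w‖ ≤ (1 / Cdag) * ‖q‖ := by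
  set A := ContinuousLinearMap.adjoint T with hAdef
  -- A is bounded below
  have hA : ∀ p : Q, Cdag * ‖p‖ ≤ ‖A p‖ := by
    intro p
    refine (hsup p).trans (Real.iSup_le ?_ (norm_nonneg _))
    rintro ⟨w, hw⟩
    have h1 : ⟪T w, p⟫ = ⟪w, A p⟫ := by
      rw [hAdef, ContinuousLinearMap.adjoint_inner_right]
    rw [h1]
    have h2 : ⟪w, A p⟫ ≤ ‖w‖ * ‖A p‖ := real_inner_le_norm w (A p)
    have hwpos : (0:ℝ) < ‖w‖ := norm_pos_iff.mpr hw
    calc ⟪w, A p⟫ / ‖w‖ ≤ (‖w‖ * ‖A p‖) / ‖w‖ := by gcongr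
      _ = ‖A p‖ := by field_simp
  have hbound : ∀ p : Q, ‖p‖ ≤ (1 / Cdag) * ‖A p‖ := by
    intro p
    rw [one_div, inv_mul_eq_div, le_div_iff₀ hCdag, mul_comm]
    exact hA p
  have hinj : Function.Injective A := by
    intro a b hab
    have := hA (a - b)
    rw [map_sub, hab, sub_self, norm_zero] at this
    have : ‖a - b‖ ≤ 0 := nonpos_of_mul_nonpos_right ?_ hCdag
    · rwa [← sub_eq_zero, ← norm_le_zero_iff]
    · linarith [this]
  -- range A is closed
  have hanti : AntilipschitzWith ⟨1/Cdag, by positivity⟩ A :=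
    ContinuousLinearMap.antilipschitz_of_bound A (by exact hbound)
  have hclosed : IsClosed ((LinearMap.range (A : Q →ₗ[ℝ] R) : Submodule ℝ R) : Set R) := by
    have := hanti.isClosed_range A.uniformContinuous
    simpa [Set.range, LinearMap.coe_range] using this
  haveI : CompleteSpace (LinearMap.range (A : Q →ₗ[ℝ] R)) := hclosed.completeSpace_coe
  -- A as an equiv onto its range
  set A' : Q →L[ℝ] (LinearMap.range (A : Q →ₗ[ℝ] R)) :=
    A.codRestrict _ (fun p => LinearMap.mem_range_self _ p) with hA'def
  have hA'inj : LinearMap.ker (A' : Q →ₗ[ℝ] LinearMap.range (A : Q →ₗ[ℝ] R)) = ⊥ := by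
    apply LinearMap.ker_eq_bot_of_injective
    intro a b hab
    apply hinj
    have : ((A' a : R)) = (A' b : R) := congrArg Subtype.val hab
    simpa [hA'def] using this
  have hA'surj : LinearMap.range (A' : Q →ₗ[ℝ] LinearMap.range (A : Q →ₗ[ℝ] R)) = ⊤ := by
    rw [LinearMap.range_eq_top]
    rintro ⟨x, y, rfl⟩
    exact ⟨y, rfl⟩
  let e : Q ≃L[ℝ] (LinearMap.range (A : Q →ₗ[ℝ] R)) := ContinuousLinearEquiv.ofBijective A' hA'inj hA'surj
  have he : ∀ p : Q, ((e p : R)) = A p := fun p => rfl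
  intro q
  -- the functional φ on range A
  let φ : (LinearMap.range (A : Q →ₗ[ℝ] R)) →L[ℝ] ℝ := (innerSL ℝ q).comp (e.symm : (LinearMap.range (A : Q →ₗ[ℝ] R)) →L[ℝ] Q)
  have hφ : ∀ m : LinearMap.range (A : Q →ₗ[ℝ] R), φ m = ⟪q, e.symm m⟫ := fun m => rfl
  have hφnorm : ‖φ‖ ≤ (1 / Cdag) * ‖q‖ := by
    refine ContinuousLinearMap.opNorm_le_bound _ (by positivity) ?_
    intro m
    have h1 : ‖e.symm m‖ ≤ (1/Cdag) * ‖m‖ := by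
      have := hbound (e.symm m)
      have h2 : A (e.symm m) = (m : R) := by
        rw [← he (e.symm m), e.apply_symm_apply]
      rwa [h2] at this
    calc ‖φ m‖ = ‖⟪q, e.symm m⟫‖ := by rw [hφ]
      _ ≤ ‖q‖ * ‖e.symm m‖ := by
          simpa using abs_real_inner_le_norm q (e.symm m)
      _ ≤ ‖q‖ * ((1/Cdag) * ‖m‖) := by
          exact mul_le_mul_of_nonneg_left h1 (norm_nonneg q)
      _ = (1/Cdag) * ‖q‖ * ‖m‖ := by ring
  set w₀ : (LinearMap.range (A : Q →ₗ[ℝ] R)) := (InnerProductSpace.toDual ℝ _).symm φ with hw₀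
  refine ⟨(w₀ : R), ?_, ?_⟩
  · apply ext_inner_left ℝ
    intro p
    have h1 : ⟪p, T (w₀ : R)⟫ = ⟪A p, (w₀ : R)⟫ := by
      simp [A, ContinuousLinearMap.adjoint_inner_left]
    have h2 : ⟪A p, (w₀ : R)⟫ = ⟪e p, w₀⟫ := by
      rw [← he p]; rfl
    have h3 : ⟪e p, w₀⟫ = φ (e p) := by
      rw [real_inner_comm, hw₀, InnerProductSpace.toDual_symm_apply]
    rw [h1, h2, h3, hφ, e.symm_apply_apply]
    exact real_inner_comm p q
  · have : ‖(w₀ : R)‖ = ‖φ‖ := by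
      rw [hw₀]
      rw [Submodule.norm_coe]
      exact LinearIsometryEquiv.norm_map _ φ
    rw [this]
    exact hφnorm
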